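/- arXiv:2602.20864 — 2 statements merged into one kernel-verified Lean document; each statement's English description precedes it below -/
import Mathlib

section
/- Let c₁, d₁ be real numbers with (c₁ − d₁)² < 16. Then the integral over [0, 2π] of (c₁(cos θ)² + 3 sin θ cos θ + d₁(sin θ)²) / (4(cos θ)² + (d₁ − c₁) sin θ cos θ + (sin θ)²) dθ equals 2π(c₁ + d₁)/√(16 − (c₁ − d₁)²). -/
open Real Filter MeasureTheory intervalIntegral Set Topology

namespace Stmt3Aux

lemma dpos (b s c : ℝ) (hb : b ^ 2 < 16) (hsc : s ^ 2 + c ^ 2 = 1) :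
    0 < 4 * c ^ 2 + b * s * c + s ^ 2 := by
  nlinarith [sq_nonneg (8 * c + b * s), sq_nonneg (2 * s + b * c), sq_nonneg s, sq_nonneg c]

lemma core (b : ℝ) (hb : b ^ 2 < 16) :
    ∫ t in (-(Real.pi / 2))..(Real.pi / 2),
        (4 * Real.sin t ^ 2 - b * Real.sin t * Real.cos t + Real.cos t ^ 2)⁻¹
      = 2 * Real.pi / Real.sqrt (16 - b ^ 2) := by
  have h16 : (0:ℝ) < 16 - b ^ 2 := by linarith
  set r : ℝ := Real.sqrt (16 - b ^ 2) with hrdef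
  have hr0 : 0 < r := Real.sqrt_pos.2 h16
  have hr2 : r ^ 2 = 16 - b ^ 2 := Real.sq_sqrt h16.le
  set f : ℝ → ℝ := fun t =>
    (4 * Real.sin t ^ 2 - b * Real.sin t * Real.cos t + Real.cos t ^ 2)⁻¹ with hfdef
  have hDpos : ∀ t : ℝ,
      0 < 4 * Real.sin t ^ 2 - b * Real.sin t * Real.cos t + Real.cos t ^ 2 := by
    intro t
    have := dpos (-b) (Real.cos t) (Real.sin t) (by nlinarith) (Real.cos_sq_add_sin_sq t)
    nlinarith [this]
  have hfc : Continuous f := by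
    apply Continuous.inv₀
    · fun_prop
    · exact fun t => (hDpos t).ne'
  have hInt : ∀ a c : ℝ, IntervalIntegrable f volume a c := fun a c =>
    hfc.intervalIntegrable a c
  set G : ℝ → ℝ := fun t =>
    2 / r * Real.arctan ((8 * Real.sin t - b * Real.cos t) / (r * Real.cos t)) with hGdef
  -- derivative of G on the open interval
  have hG : ∀ t ∈ Ioo (-(Real.pi / 2)) (Real.pi / 2), HasDerivAt G (f t) t := by
    intro t ht
    have hcos : 0 < Real.cos t := Real.cos_pos_of_mem_Ioo ht
    have hden : r * Real.cos t ≠ 0 := (mul_pos hr0 hcos).ne'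
    have hu : HasDerivAt (fun t => 8 * Real.sin t - b * Real.cos t)
        (8 * Real.cos t - b * (-Real.sin t)) t :=
      ((Real.hasDerivAt_sin t).const_mul 8).sub ((Real.hasDerivAt_cos t).const_mul b)
    have hv : HasDerivAt (fun t => r * Real.cos t) (r * (-Real.sin t)) t :=
      (Real.hasDerivAt_cos t).const_mul r
    have hw := (hu.div hv hden).arctan
    have hG' := hw.const_mul (2 / r)
    refine hG'.congr_deriv (Eq.symm ?_)
    have h1 : (0:ℝ) <
        1 + ((8 * Real.sin t - b * Real.cos t) / (r * Real.cos t)) ^ 2 := by positivity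
    have hpyth := Real.sin_sq_add_cos_sq t
    have hD := hDpos t
    show (4 * Real.sin t ^ 2 - b * Real.sin t * Real.cos t + Real.cos t ^ 2)⁻¹ = _
    have e2 : (8 * Real.cos t - b * -Real.sin t) * (r * Real.cos t) -
        (8 * Real.sin t - b * Real.cos t) * (r * -Real.sin t) = 8 * r := by
      linear_combination (8 * r) * hpyth
    have e3 : 1 + ((8 * Real.sin t - b * Real.cos t) / (r * Real.cos t)) ^ 2 =
        16 * (4 * Real.sin t ^ 2 - b * Real.sin t * Real.cos t + Real.cos t ^ 2) /
          (r * Real.cos t) ^ 2 := by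
      rw [div_pow, add_div' _ _ _ (by positivity)]
      rw [div_eq_div_iff (by positivity) (by positivity)]
      linear_combination ((Real.cos t) ^ 2 * (r * Real.cos t) ^ 2) * hr2
    simp only [Pi.div_apply]
    rw [e2, e3, one_div_div]
    rw [eq_comm]
    field_simp
    ring
  -- primitive
  set Φ : ℝ → ℝ := fun x => ∫ t in (-(Real.pi / 2))..x, f t with hΦdef
  have hΦd : ∀ x : ℝ, HasDerivAt Φ (f x) x := fun x =>
    intervalIntegral.integral_hasDerivAt_right (hInt _ _)
      (hfc.stronglyMeasurableAtFilter _ _) hfc.continuousAt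
  have hΦc : Continuous Φ :=
    (show Differentiable ℝ Φ from fun x => (hΦd x).differentiableAt).continuous
  have hpi : (0:ℝ) < Real.pi := Real.pi_pos
  -- key identity on the open interval
  have key : ∀ x ∈ Ioo (-(Real.pi / 2)) (0 : ℝ),
      Φ (-x) - Φ x - (G (-x) - G x) = 0 := by
    intro x hx
    have hx1 : -(Real.pi / 2) < x := hx.1
    have hx2 : x < 0 := hx.2
    have hmem : ∀ t ∈ Set.uIcc x (-x), t ∈ Ioo (-(Real.pi / 2)) (Real.pi / 2) := by
      intro t ht
      rw [Set.uIcc_of_le (by linarith)] at ht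
      exact ⟨lt_of_lt_of_le hx1 ht.1, lt_of_le_of_lt ht.2 (by linarith)⟩
    have hsub : ∫ t in x..(-x), f t = G (-x) - G x :=
      intervalIntegral.integral_eq_sub_of_hasDerivAt
        (fun t ht => hG t (hmem t ht)) (hInt _ _)
    have hadd : Φ x + ∫ t in x..(-x), f t = Φ (-x) :=
      intervalIntegral.integral_add_adjacent_intervals (hInt _ _) (hInt _ _)
    rw [hsub] at hadd
    linarith
  have hIoo : Ioo (-(Real.pi / 2)) (0 : ℝ) ∈ 𝓝[>] (-(Real.pi / 2)) :=
    Ioo_mem_nhdsGT (by linarith)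
  have T1 : Tendsto Φ (𝓝[>] (-(Real.pi / 2))) (𝓝 0) := by
    have h := (hΦc.tendsto (-(Real.pi / 2))).mono_left
      (nhdsWithin_le_nhds (s := Ioi (-(Real.pi / 2))))
    rwa [show Φ (-(Real.pi / 2)) = 0 from intervalIntegral.integral_same] at h
  have hneg : Tendsto (fun x : ℝ => -x) (𝓝[>] (-(Real.pi / 2))) (𝓝 (Real.pi / 2)) := by
    have := (continuous_neg.tendsto (-(Real.pi / 2))).mono_left
      (nhdsWithin_le_nhds (s := Ioi (-(Real.pi / 2))))
    simpa using this
  have T2 : Tendsto (fun x => Φ (-x)) (𝓝[>] (-(Real.pi / 2))) (𝓝 (Φ (Real.pi / 2))) :=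
    (hΦc.tendsto (Real.pi / 2)).comp hneg
  have hBinv : Tendsto (fun x => (r * Real.cos x)⁻¹) (𝓝[>] (-(Real.pi / 2))) atTop := by
    apply tendsto_inv_nhdsGT_zero.comp
    rw [tendsto_nhdsWithin_iff]
    constructor
    · have hc : Continuous fun x : ℝ => r * Real.cos x := by fun_prop
      have h := (hc.tendsto (-(Real.pi / 2))).mono_left
        (nhdsWithin_le_nhds (s := Ioi (-(Real.pi / 2))))
      simpa using h
    · filter_upwards [hIoo] with x hx
      exact mul_pos hr0 (Real.cos_pos_of_mem_Ioo ⟨hx.1, by linarith [hx.2]⟩)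
  have TA : Tendsto (fun x => 8 * Real.sin x - b * Real.cos x)
      (𝓝[>] (-(Real.pi / 2))) (𝓝 (-8)) := by
    have hc : Continuous fun x => 8 * Real.sin x - b * Real.cos x := by fun_prop
    have h := (hc.tendsto (-(Real.pi / 2))).mono_left
      (nhdsWithin_le_nhds (s := Ioi (-(Real.pi / 2))))
    norm_num at h
    exact h
  have TwBot : Tendsto (fun x => (8 * Real.sin x - b * Real.cos x) / (r * Real.cos x))
      (𝓝[>] (-(Real.pi / 2))) atBot := by
    simp only [div_eq_mul_inv]
    exact TA.neg_mul_atTop (by norm_num) hBinv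
  have T3 : Tendsto G (𝓝[>] (-(Real.pi / 2))) (𝓝 (2 / r * (-(Real.pi / 2)))) := by
    have harc := (tendsto_nhds_of_tendsto_nhdsWithin Real.tendsto_arctan_atBot).comp TwBot
    exact harc.const_mul (2 / r)
  have TA' : Tendsto (fun x => -8 * Real.sin x - b * Real.cos x)
      (𝓝[>] (-(Real.pi / 2))) (𝓝 8) := by
    have hc : Continuous fun x => -8 * Real.sin x - b * Real.cos x := by fun_prop
    have h := (hc.tendsto (-(Real.pi / 2))).mono_left
      (nhdsWithin_le_nhds (s := Ioi (-(Real.pi / 2))))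
    norm_num at h
    exact h.congr fun x => by ring
  have TwTop : Tendsto (fun x => (-8 * Real.sin x - b * Real.cos x) / (r * Real.cos x))
      (𝓝[>] (-(Real.pi / 2))) atTop := by
    simp only [div_eq_mul_inv]
    exact Filter.Tendsto.pos_mul_atTop (by norm_num) TA' hBinv
  have hGneg : ∀ x : ℝ, G (-x) =
      2 / r * Real.arctan ((-8 * Real.sin x - b * Real.cos x) / (r * Real.cos x)) := by
    intro x
    simp only [hGdef, Real.sin_neg, Real.cos_neg]
    ring_nf
  have T4 : Tendsto (fun x => G (-x)) (𝓝[>] (-(Real.pi / 2)))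
      (𝓝 (2 / r * (Real.pi / 2))) := by
    have harc := (tendsto_nhds_of_tendsto_nhdsWithin Real.tendsto_arctan_atTop).comp TwTop
    have h := harc.const_mul (2 / r)
    refine h.congr fun x => ?_
    exact (hGneg x).symm
  have Tall : Tendsto (fun x => Φ (-x) - Φ x - (G (-x) - G x)) (𝓝[>] (-(Real.pi / 2)))
      (𝓝 (Φ (Real.pi / 2) - 0 - (2 / r * (Real.pi / 2) - 2 / r * (-(Real.pi / 2))))) :=
    (T2.sub T1).sub (T4.sub T3)
  have Tzero : Tendsto (fun x => Φ (-x) - Φ x - (G (-x) - G x))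
      (𝓝[>] (-(Real.pi / 2))) (𝓝 0) := by
    apply Tendsto.congr' _ tendsto_const_nhds
    filter_upwards [hIoo] with x hx
    exact (key x hx).symm
  have hfin : Φ (Real.pi / 2) - 0 - (2 / r * (Real.pi / 2) - 2 / r * (-(Real.pi / 2))) = 0 :=
    tendsto_nhds_unique Tall Tzero
  have h2 : 2 / r * (Real.pi / 2) - 2 / r * (-(Real.pi / 2)) = 2 * Real.pi / r := by
    field_simp
    ring
  show Φ (Real.pi / 2) = 2 * Real.pi / r
  rw [h2] at hfin
  linarith

end Stmt3Aux

theorem stmt3 (c₁ d₁ : ℝ) (h : (c₁ - d₁) ^ 2 < 16) :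
    ∫ θ in (0 : ℝ)..(2 * Real.pi),
        (c₁ * (Real.cos θ) ^ 2 + 3 * Real.sin θ * Real.cos θ + d₁ * (Real.sin θ) ^ 2) /
          (4 * (Real.cos θ) ^ 2 + (d₁ - c₁) * Real.sin θ * Real.cos θ + (Real.sin θ) ^ 2)
      = 2 * Real.pi * (c₁ + d₁) / Real.sqrt (16 - (c₁ - d₁) ^ 2) := by
  have hpi : (0:ℝ) < Real.pi := Real.pi_pos
  have hb : (d₁ - c₁) ^ 2 < 16 := by nlinarith
  set b := d₁ - c₁ with hbdef
  set r := Real.sqrt (16 - (c₁ - d₁) ^ 2) with hrdef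
  have h16 : (0:ℝ) < 16 - (c₁ - d₁) ^ 2 := by linarith
  have hr0 : 0 < r := Real.sqrt_pos.2 h16
  have hD : ∀ θ : ℝ,
      0 < 4 * Real.cos θ ^ 2 + b * Real.sin θ * Real.cos θ + Real.sin θ ^ 2 :=
    fun θ => Stmt3Aux.dpos b (Real.sin θ) (Real.cos θ) hb (Real.sin_sq_add_cos_sq θ)
  set g : ℝ → ℝ := fun θ =>
    (4 * Real.cos θ ^ 2 + b * Real.sin θ * Real.cos θ + Real.sin θ ^ 2)⁻¹ with hgdef
  have hgc : Continuous g := Continuous.inv₀ (by fun_prop) (fun θ => (hD θ).ne')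
  set q : ℝ → ℝ := fun θ =>
    (b * (Real.cos θ ^ 2 - Real.sin θ ^ 2) - 6 * Real.sin θ * Real.cos θ) /
      (4 * Real.cos θ ^ 2 + b * Real.sin θ * Real.cos θ + Real.sin θ ^ 2) with hqdef
  have hqc : Continuous q :=
    Continuous.div (by fun_prop) (by fun_prop) (fun θ => (hD θ).ne')
  have hsplit : ∀ θ : ℝ,
      (c₁ * Real.cos θ ^ 2 + 3 * Real.sin θ * Real.cos θ + d₁ * Real.sin θ ^ 2) /
        (4 * Real.cos θ ^ 2 + b * Real.sin θ * Real.cos θ + Real.sin θ ^ 2)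
      = (c₁ + d₁) / 2 * g θ + (-(1:ℝ) / 2) * q θ := by
    intro θ
    have hpyth := Real.sin_sq_add_cos_sq θ
    have hDθ : (4 * Real.cos θ ^ 2 + b * Real.sin θ * Real.cos θ + Real.sin θ ^ 2) ≠ 0 :=
      (hD θ).ne'
    simp only [hgdef, hqdef]
    field_simp
    rw [div_left_inj' (ne_of_gt (by linarith [hD θ]))]
    linear_combination (c₁ + d₁) * hpyth + (Real.cos θ ^ 2 - Real.sin θ ^ 2) * hbdef
  rw [intervalIntegral.integral_congr
    (g := fun θ => (c₁ + d₁) / 2 * g θ + (-(1:ℝ) / 2) * q θ) (fun θ _ => hsplit θ)]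
  rw [intervalIntegral.integral_add ((hgc.intervalIntegrable _ _).const_mul _)
    ((hqc.intervalIntegrable _ _).const_mul _)]
  rw [intervalIntegral.integral_const_mul, intervalIntegral.integral_const_mul]
  have hqint : ∫ θ in (0:ℝ)..(2 * Real.pi), q θ = 0 := by
    have hL : ∀ θ : ℝ, HasDerivAt (fun θ =>
        Real.log (4 * Real.cos θ ^ 2 + b * Real.sin θ * Real.cos θ + Real.sin θ ^ 2))
        (q θ) θ := by
      intro θ
      have hDer : HasDerivAt (fun θ =>
          4 * Real.cos θ ^ 2 + b * Real.sin θ * Real.cos θ + Real.sin θ ^ 2)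
          (b * (Real.cos θ ^ 2 - Real.sin θ ^ 2) - 6 * Real.sin θ * Real.cos θ) θ := by
        have h := ((((Real.hasDerivAt_cos θ).pow 2).const_mul 4).add
          (((Real.hasDerivAt_sin θ).const_mul b).mul (Real.hasDerivAt_cos θ))).add
          ((Real.hasDerivAt_sin θ).pow 2)
        refine h.congr_deriv ?_
        ring
      have h := (Real.hasDerivAt_log (hD θ).ne').comp θ hDer
      refine h.congr_deriv (Eq.symm ?_)
      simp only [hqdef]
      rw [div_eq_inv_mul]
    rw [intervalIntegral.integral_eq_sub_of_hasDerivAt (fun θ _ => hL θ)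
      (hqc.intervalIntegrable _ _)]
    norm_num [Real.sin_two_pi, Real.cos_two_pi]
  have hgint : ∫ θ in (0:ℝ)..(2 * Real.pi), g θ = 4 * Real.pi / r := by
    have hsplit2 : (∫ θ in (0:ℝ)..Real.pi, g θ) + ∫ θ in Real.pi..(2 * Real.pi), g θ
        = ∫ θ in (0:ℝ)..(2 * Real.pi), g θ :=
      intervalIntegral.integral_add_adjacent_intervals
        (hgc.intervalIntegrable _ _) (hgc.intervalIntegrable _ _)
    have hper : ∫ θ in Real.pi..(2 * Real.pi), g θ = ∫ θ in (0:ℝ)..Real.pi, g θ := by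
      have h1 : (∫ θ in (0:ℝ)..Real.pi, g (θ + Real.pi))
          = ∫ θ in ((0:ℝ) + Real.pi)..(Real.pi + Real.pi), g θ :=
        intervalIntegral.integral_comp_add_right g Real.pi
      rw [show (0:ℝ) + Real.pi = Real.pi by ring,
        show Real.pi + Real.pi = 2 * Real.pi by ring] at h1
      rw [← h1]
      apply intervalIntegral.integral_congr
      intro θ _
      simp only [hgdef]
      rw [Real.sin_add, Real.cos_add, Real.sin_pi, Real.cos_pi]
      ring_nf
    have hmid : ∫ θ in (0:ℝ)..Real.pi, g θ = 2 * Real.pi / Real.sqrt (16 - b ^ 2) := by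
      have h1 : (∫ t in (-(Real.pi / 2))..(Real.pi / 2), g (t + Real.pi / 2))
          = ∫ θ in (-(Real.pi / 2) + Real.pi / 2)..(Real.pi / 2 + Real.pi / 2), g θ :=
        intervalIntegral.integral_comp_add_right g (Real.pi / 2)
      rw [show -(Real.pi / 2) + Real.pi / 2 = (0:ℝ) by ring,
        show Real.pi / 2 + Real.pi / 2 = Real.pi by ring] at h1
      rw [← h1]
      have h2 : EqOn (fun t => g (t + Real.pi / 2))
          (fun t => (4 * Real.sin t ^ 2 - b * Real.sin t * Real.cos t + Real.cos t ^ 2)⁻¹)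
          (Set.uIcc (-(Real.pi / 2)) (Real.pi / 2)) := by
        intro t _
        simp only [hgdef]
        rw [Real.sin_add, Real.cos_add, Real.sin_pi_div_two, Real.cos_pi_div_two]
        ring_nf
      rw [intervalIntegral.integral_congr h2]
      exact Stmt3Aux.core b hb
    have hrr : Real.sqrt (16 - b ^ 2) = r := by rw [hrdef]; congr 1; ring
    rw [← hsplit2, hper, hmid, hrr]
    ring
  rw [hqint, hgint]
  field_simp
  ring
end

section
/- Let α, β, s be positive natural numbers with s > β, and let A, B, D be real numbers. Define H₁(x, y) = (1/(2sα))·((Ds − Bα − Dβ)·x^(2α)·y^(2β) − Aα·y^(2s)) and μ(x, y) = ((Bα + Dβ)/(sα))·x^(2α−1)·y^(2β−1). Then for all real x, y: −∂H₁/∂y(x, y) + μ(x, y)·(s − β)·x = A·y^(2s−1) + B·x^(2α)·y^(2β−1), and ∂H₁/∂x(x, y) + μ(x, y)·α·y = D·x^(2α−1)·y^(2β). -/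
noncomputable def H₁ (α β s : ℕ) (A B D : ℝ) (x y : ℝ) : ℝ :=
  (1 / (2 * (s : ℝ) * (α : ℝ))) *
    ((D * s - B * α - D * β) * x ^ (2 * α) * y ^ (2 * β) - A * α * y ^ (2 * s))

noncomputable def μdiss (α β s : ℕ) (B D : ℝ) (x y : ℝ) : ℝ :=
  ((B * α + D * β) / ((s : ℝ) * (α : ℝ))) * x ^ (2 * α - 1) * y ^ (2 * β - 1)

theorem stmt15 (α β s : ℕ) (hα : 0 < α) (hβ : 0 < β) (hs : 0 < s) (hβs : β < s)
    (A B D : ℝ) :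
    ∀ x y : ℝ,
      (-(deriv (fun y' => H₁ α β s A B D x y') y)
          + μdiss α β s B D x y * ((s : ℝ) - (β : ℝ)) * x
        = A * y ^ (2 * s - 1) + B * x ^ (2 * α) * y ^ (2 * β - 1)) ∧
      (deriv (fun x' => H₁ α β s A B D x' y) x + μdiss α β s B D x y * (α : ℝ) * y
        = D * x ^ (2 * α - 1) * y ^ (2 * β)) := by
  intro x y
  have hα0 : (α : ℝ) ≠ 0 := Nat.cast_ne_zero.mpr hα.ne'
  have hs0 : (s : ℝ) ≠ 0 := Nat.cast_ne_zero.mpr hs.ne'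
  obtain ⟨a, ha⟩ : ∃ a, 2 * α = a + 1 := ⟨2 * α - 1, by omega⟩
  obtain ⟨b, hb⟩ : ∃ b, 2 * β = b + 1 := ⟨2 * β - 1, by omega⟩
  obtain ⟨t, ht⟩ : ∃ t, 2 * s = t + 1 := ⟨2 * s - 1, by omega⟩
  have hy : deriv (fun y' => H₁ α β s A B D x y') y
      = (1 / (2 * (s : ℝ) * (α : ℝ))) *
        ((D * s - B * α - D * β) * x ^ (2 * α) * ((2 * β : ℕ) * y ^ (2 * β - 1))
          - A * α * ((2 * s : ℕ) * y ^ (2 * s - 1))) := by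
    have h : HasDerivAt (fun y' => H₁ α β s A B D x y')
        ((1 / (2 * (s : ℝ) * (α : ℝ))) *
          ((D * s - B * α - D * β) * x ^ (2 * α) * ((2 * β : ℕ) * y ^ (2 * β - 1))
            - A * α * ((2 * s : ℕ) * y ^ (2 * s - 1)))) y := by
      unfold H₁
      exact (((hasDerivAt_pow (2 * β) y).const_mul _).sub
        ((hasDerivAt_pow (2 * s) y).const_mul _)).const_mul _
    exact h.deriv
  have hx : deriv (fun x' => H₁ α β s A B D x' y) x
      = (1 / (2 * (s : ℝ) * (α : ℝ))) *
        ((D * s - B * α - D * β) * y ^ (2 * β) * ((2 * α : ℕ) * x ^ (2 * α - 1))) := by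
    have h : HasDerivAt (fun x' => H₁ α β s A B D x' y)
        ((1 / (2 * (s : ℝ) * (α : ℝ))) *
          ((D * s - B * α - D * β) * y ^ (2 * β) * ((2 * α : ℕ) * x ^ (2 * α - 1)))) x := by
      have h1 : HasDerivAt (fun x' : ℝ =>
          (D * s - B * α - D * β) * x' ^ (2 * α) * y ^ (2 * β) - A * α * y ^ (2 * s))
          ((D * s - B * α - D * β) * y ^ (2 * β) * ((2 * α : ℕ) * x ^ (2 * α - 1))) x := by
        have h2 := (((hasDerivAt_pow (2 * α) x).const_mul
          (D * s - B * α - D * β)).mul_const (y ^ (2 * β))).sub_const (A * α * y ^ (2 * s))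
        refine h2.congr_deriv ?_
        ring
      exact h1.const_mul _
    exact h.deriv
  rw [hy, hx]
  unfold μdiss
  rw [ha, hb, ht]
  simp only [Nat.add_sub_cancel]
  push_cast [ha, hb, ht]
  have ha' : (a : ℝ) = 2 * α - 1 := by
    have : ((2 * α : ℕ) : ℝ) = ((a + 1 : ℕ) : ℝ) := by rw [ha]
    push_cast at this; linarith
  have hb' : (b : ℝ) = 2 * β - 1 := by
    have : ((2 * β : ℕ) : ℝ) = ((b + 1 : ℕ) : ℝ) := by rw [hb]
    push_cast at this; linarith
  have ht' : (t : ℝ) = 2 * s - 1 := by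
    have : ((2 * s : ℕ) : ℝ) = ((t + 1 : ℕ) : ℝ) := by rw [ht]
    push_cast at this; linarith
  rw [ha', hb', ht']
  constructor <;> (field_simp; ring)
end
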